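/- Let n ≥ 1, let L₂, …, Lₙ be Kripke complete monomodal logics, and let L = T × L₂ × … × Lₙ. Fix an n-modal formula φ whose variables are among p₁, …, p_m and let A and σ be the formula and translation defined from φ. If φ ∉ L, then A → σ(φ) ∉ L. (Direction (⇐) of Lemma 3.1, in contrapositive form) -/

import Mathlib

namespace ModalProducts

/-- `N`-modal formulas over propositional variables indexed by `ℕ`
(the variable `pₖ` is `var k`; the extra variable `p` is `var 0`). -/
inductive MF (N : ℕ) : Type
  | var : ℕ → MF N
  | bot : MF N
  | and : MF N → MF N → MF N
  | or  : MF N → MF N → MF N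
  | imp : MF N → MF N → MF N
  | box : Fin N → MF N → MF N
deriving DecidableEq

namespace MF

variable {N : ℕ}

/-- negation: `¬ψ = ψ → ⊥`. -/
def neg (φ : MF N) : MF N := imp φ bot

/-- diamond: `◇ᵢψ = ¬□ᵢ¬ψ`. -/
def dia (i : Fin N) (φ : MF N) : MF N := neg (box i (neg φ))

/-- modal depth. -/
def md : MF N → ℕ
  | var _ => 0
  | bot => 0
  | and φ ψ => max (md φ) (md ψ)
  | or φ ψ => max (md φ) (md ψ)
  | imp φ ψ => max (md φ) (md ψ)
  | box _ φ => md φ + 1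

/-- length (number of symbols; the variable `pₖ` counts as `k+1` symbols,
accounting for the subscript). -/
def len : MF N → ℕ
  | var q => q + 1
  | bot => 1
  | and φ ψ => len φ + len ψ + 1
  | or φ ψ => len φ + len ψ + 1
  | imp φ ψ => len φ + len ψ + 1
  | box _ φ => len φ + 1

/-- the set of propositional variables occurring in a formula. -/
def vars : MF N → Set ℕ
  | var q => {q}
  | bot => ∅
  | and φ ψ => vars φ ∪ vars ψ
  | or φ ψ => vars φ ∪ vars ψ
  | imp φ ψ => vars φ ∪ vars ψ
  | box _ φ => vars φ

/-- the largest index of a variable occurring in a formula (0 if none). -/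
def maxVar : MF N → ℕ
  | var q => q
  | bot => 0
  | and φ ψ => max (maxVar φ) (maxVar ψ)
  | or φ ψ => max (maxVar φ) (maxVar ψ)
  | imp φ ψ => max (maxVar φ) (maxVar ψ)
  | box _ φ => maxVar φ

/-- the list of subformulas of a formula. -/
def subfs : MF N → List (MF N)
  | var q => [var q]
  | bot => [bot]
  | and φ ψ => and φ ψ :: (subfs φ ++ subfs ψ)
  | or φ ψ => or φ ψ :: (subfs φ ++ subfs ψ)
  | imp φ ψ => imp φ ψ :: (subfs φ ++ subfs ψ)
  | box i φ => box i φ :: subfs φ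

/-- uniform substitution of formulas for variables. -/
def subst (s : ℕ → MF N) : MF N → MF N
  | var q => s q
  | bot => bot
  | and φ ψ => and (subst s φ) (subst s ψ)
  | or φ ψ => or (subst s φ) (subst s ψ)
  | imp φ ψ => imp (subst s φ) (subst s ψ)
  | box i φ => box i (subst s φ)

end MF

/-- `θ` is a subformula of `φ`. -/
def Subformula {N : ℕ} (θ φ : MF N) : Prop := θ ∈ φ.subfs

/-- A Kripke `N`-frame: a nonempty set of points with `N` accessibility relations. -/
structure Frame (N : ℕ) where
  W : Type
  nonempty : Nonempty W
  R : Fin N → W → W → Prop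

/-- Truth of a formula at a point of a frame under a valuation. -/
def Sat {N : ℕ} (F : Frame N) (v : ℕ → Set F.W) : F.W → MF N → Prop
  | x, .var q => x ∈ v q
  | _, .bot => False
  | x, .and φ ψ => Sat F v x φ ∧ Sat F v x ψ
  | x, .or φ ψ => Sat F v x φ ∨ Sat F v x ψ
  | x, .imp φ ψ => Sat F v x φ → Sat F v x ψ
  | x, .box i φ => ∀ y, F.R i x y → Sat F v y φ

/-- Validity of a formula in a frame: truth at every point under every valuation. -/
def Valid {N : ℕ} (F : Frame N) (φ : MF N) : Prop := ∀ (v : ℕ → Set F.W) (x : F.W), Sat F v x φ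

/-- A set of formulas is valid in a frame if all of its members are. -/
def ValidSet {N : ℕ} (F : Frame N) (L : Set (MF N)) : Prop := ∀ φ ∈ L, Valid F φ

/-- The logic of a class of frames. -/
def Logic {N : ℕ} (C : Set (Frame N)) : Set (MF N) := {φ | ∀ F ∈ C, Valid F φ}

/-- A logic is Kripke complete if it is the logic of some nonempty class of frames. -/
def KripkeComplete {N : ℕ} (L : Set (MF N)) : Prop :=
  ∃ C : Set (Frame N), C.Nonempty ∧ L = Logic C

/-- The product of `N` 1-frames. -/
def prodFrame {N : ℕ} (Fs : Fin N → Frame 1) : Frame N where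
  W := ∀ i, (Fs i).W
  nonempty := ⟨fun i => (Fs i).nonempty.some⟩
  R := fun i x y => (Fs i).R 0 (x i) (y i) ∧ ∀ k, k ≠ i → x k = y k

/-- The product of `N` Kripke complete monomodal logics: the logic of the class of
products of frames of the factors. -/
def productLogic {N : ℕ} (Ls : Fin N → Set (MF 1)) : Set (MF N) :=
  Logic {F | ∃ Fs : Fin N → Frame 1, (∀ i, ValidSet (Fs i) (Ls i)) ∧ F = prodFrame Fs}

/-- A 1-frame is reflexive. -/
def ReflexiveFrame (F : Frame 1) : Prop := ∀ x, F.R 0 x x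

/-- The logic `T` of all reflexive 1-frames. -/
def logicT : Set (MF 1) := Logic {F | ReflexiveFrame F}

/-- The logic `K` of all 1-frames. -/
def logicK : Set (MF 1) := Logic Set.univ

/-- The logic `S5` of all 1-frames whose relation is an equivalence. -/
def logicS5 : Set (MF 1) := Logic {F | Equivalence (F.R 0)}

section Translation

variable {n : ℕ}

/-- the variable `p`. -/
def pv : MF (n+1) := .var 0

/-- `◆₁ψ = ◇₁(¬p ∧ ◇₁(p ∧ ψ))`. -/
def blackDia (ψ : MF (n+1)) : MF (n+1) :=
  MF.dia 0 (.and (MF.neg pv) (MF.dia 0 (.and pv ψ)))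

/-- `α_k = ◆₁ᵏ □₁ p`. -/
def alphaF (k : ℕ) : MF (n+1) := blackDia^[k] (.box 0 pv)

/-- `β_k = ¬p ∧ ◇₁(p ∧ α_k)`. -/
def betaF (k : ℕ) : MF (n+1) := .and (MF.neg pv) (MF.dia 0 (.and pv (alphaF k)))

/-- `B = β_{m+1}`. -/
def Bf (m : ℕ) : MF (n+1) := betaF (m+1)

/-- The translation `σ`: `σ(p_k) = β_k`, `σ(⊥) = ⊥`, `σ` commutes with `∧, ∨, →`,
and `σ(□ᵢψ) = □ᵢ(B → σ(ψ))`. -/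
def sigmaT (m : ℕ) : MF (n+1) → MF (n+1)
  | .var k => betaF k
  | .bot => .bot
  | .and φ ψ => .and (sigmaT m φ) (sigmaT m ψ)
  | .or φ ψ => .or (sigmaT m φ) (sigmaT m ψ)
  | .imp φ ψ => .imp (sigmaT m φ) (sigmaT m ψ)
  | .box i φ => .box i (.imp (Bf m) (sigmaT m φ))

/-- conjunction of a head formula with a list of formulas. -/
def bigAnd (ψ : MF (n+1)) (l : List (MF (n+1))) : MF (n+1) := l.foldl .and ψ

/-- `□^{≤k}`: `□^{≤0}ψ = ψ`, `□^{≤k+1}ψ = □^{≤k}ψ ∧ □₁□^{≤k}ψ ∧ … ∧ □ₙ□^{≤k}ψ`. -/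
def boxLe : ℕ → MF (n+1) → MF (n+1)
  | 0, ψ => ψ
  | k+1, ψ => bigAnd (boxLe k ψ) (List.ofFn fun i : Fin (n+1) => .box i (boxLe k ψ))

/-- `□₋₁^{≤k}`: like `□^{≤k}` but using only `□₂, …, □ₙ`. -/
def boxLeTail : ℕ → MF (n+1) → MF (n+1)
  | 0, ψ => ψ
  | k+1, ψ => bigAnd (boxLeTail k ψ) (List.ofFn fun i : Fin n => .box i.succ (boxLeTail k ψ))

/-- `◇₋₁^{≤k}ψ = ¬□₋₁^{≤k}¬ψ`. -/
def diaLeTail (k : ℕ) (ψ : MF (n+1)) : MF (n+1) := MF.neg (boxLeTail k (MF.neg ψ))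

/-- `A = B ∧ □^{≤md φ}(B → □₋₁^{≤md φ}B) ∧ □^{≤md φ}(◇₋₁^{≤md φ}B → B)`. -/
def Af (m : ℕ) (φ : MF (n+1)) : MF (n+1) :=
  .and (Bf m)
    (.and (boxLe φ.md (.imp (Bf m) (boxLeTail φ.md (Bf m))))
          (boxLe φ.md (.imp (diaLeTail φ.md (Bf m)) (Bf m))))

end Translation

end ModalProducts

namespace ModalProducts
namespace Lemma31

open MF Sum

/-! ### General satisfaction lemmas -/

section General

variable {N : ℕ} (F : Frame N) (v : ℕ → Set F.W)

lemma sat_neg (x : F.W) (ψ : MF N) : Sat F v x (MF.neg ψ) ↔ ¬ Sat F v x ψ := by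
  simp [MF.neg, Sat]

lemma sat_dia (x : F.W) (i : Fin N) (ψ : MF N) :
    Sat F v x (MF.dia i ψ) ↔ ∃ y, F.R i x y ∧ Sat F v y ψ := by
  simp [MF.dia, MF.neg, Sat]

end General

section General2
variable {n : ℕ} (F : Frame (n+1)) (v : ℕ → Set F.W)

lemma sat_bigAnd (x : F.W) (ψ : MF (n+1)) (l : List (MF (n+1))) :
    Sat F v x (bigAnd ψ l) ↔ Sat F v x ψ ∧ ∀ χ ∈ l, Sat F v x χ := by
  induction l generalizing ψ with
  | nil => simp [bigAnd]
  | cons χ l ih =>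
      have h := ih (MF.and ψ χ)
      simp only [bigAnd, List.foldl_cons] at h ⊢
      rw [h]
      simp only [Sat, List.mem_cons]
      constructor
      · rintro ⟨⟨h1, h2⟩, h3⟩
        exact ⟨h1, fun χ' hχ' => hχ'.elim (fun e => e ▸ h2) (h3 χ')⟩
      · rintro ⟨h1, h2⟩
        exact ⟨⟨h1, h2 χ (Or.inl rfl)⟩, fun χ' hχ' => h2 χ' (Or.inr hχ')⟩

end General2

/-! ### The spike frame -/

section Constr

variable {n : ℕ} (m : ℕ) (Fs : Fin (n+1) → Frame 1)

/-- Worlds of the new first frame: original worlds (`inl`) plus spike points. -/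
abbrev SpW := (Fs 0).W ⊕ ((Fs 0).W × ℕ × ℕ)

/-- The new first-coordinate relation. -/
def spR : SpW Fs → SpW Fs → Prop
  | inl x, inl y => (Fs 0).R 0 x y
  | inl x, inr (x', k, j) => x' = x ∧ j = 1 ∧ 1 ≤ k ∧ k ≤ m+1
  | inr (x,k,j), inr (x',k',j') => x' = x ∧ k' = k ∧ (j' = j ∨ (j' = j+1 ∧ j+1 ≤ 2*k+1))
  | inr _, inl _ => False

/-- The new first frame. -/
def G1 : Frame 1 := ⟨SpW Fs, ⟨inl (Fs 0).nonempty.some⟩, fun _ => spR m Fs⟩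

/-- The factors of the new product frame. -/
def Gs : Fin (n+1) → Frame 1 := fun i => match i with
  | ⟨0, _⟩ => G1 m Fs
  | ⟨j+1, h⟩ => Fs ⟨j+1, h⟩

/-- tails: choices of coordinates `1, …, n`. -/
abbrev TailW := ∀ i : Fin n, (Fs i.succ).W

/-- assembling a new product world from a head and a tail. -/
def consW (w : SpW Fs) (t : TailW Fs) : ∀ i, (Gs m Fs i).W := fun i => match i with
  | ⟨0, _⟩ => w
  | ⟨j+1, h⟩ => t ⟨j, Nat.lt_of_succ_lt_succ h⟩

/-- assembling an original product world from a head and a tail. -/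
def consO (x : (Fs 0).W) (t : TailW Fs) : ∀ i, (Fs i).W := fun i => match i with
  | ⟨0, _⟩ => x
  | ⟨j+1, h⟩ => t ⟨j, Nat.lt_of_succ_lt_succ h⟩

lemma consW_eta (w : ∀ i, (Gs m Fs i).W) :
    w = consW m Fs (w 0) (fun i => w i.succ) := by
  funext i
  match i with
  | ⟨0, _⟩ => rfl
  | ⟨j+1, h⟩ => rfl

lemma consO_eta (w : ∀ i, (Fs i).W) :
    w = consO Fs (w 0) (fun i => w i.succ) := by
  funext i
  match i with
  | ⟨0, _⟩ => rfl
  | ⟨j+1, h⟩ => rfl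

end Constr

section Constr2

variable {n : ℕ} (m : ℕ) (Fs : Fin (n+1) → Frame 1) (v : ℕ → Set (∀ i, (Fs i).W))

/-- which spikes are enabled above a given column. -/
def enabled (x : (Fs 0).W) (t : TailW Fs) (k : ℕ) : Prop :=
  k = m+1 ∨ (1 ≤ k ∧ k ≤ m ∧ consO Fs x t ∈ v k)

/-- the value of the variable `p` at a head + tail. -/
def pp : SpW Fs → TailW Fs → Prop
  | inl _, _ => False
  | inr (x,k,j), t =>
      (1 ≤ k ∧ k ≤ m+1 ∧ 1 ≤ j ∧ j ≤ 2*k+1 ∧ enabled m Fs v x t k) → Odd j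

/-- the new product frame. -/
def GF : Frame (n+1) := prodFrame (Gs m Fs)

/-- the new valuation. -/
def v' : ℕ → Set (GF m Fs).W :=
  fun q => {w | q = 0 ∧ pp m Fs v (w 0) (fun i => w i.succ)}

lemma sat_pv_cons (w : SpW Fs) (t : TailW Fs) :
    Sat (GF m Fs) (v' m Fs v) (consW m Fs w t) pv ↔ pp m Fs v w t := by
  show consW m Fs w t ∈ v' m Fs v 0 ↔ _
  simp only [v', Set.mem_setOf_eq, true_and]
  exact Iff.rfl

lemma R0_cons_iff (w : SpW Fs) (t : TailW Fs) (u : (GF m Fs).W) :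
    (GF m Fs).R 0 (consW m Fs w t) u ↔ ∃ w', spR m Fs w w' ∧ u = consW m Fs w' t := by
  constructor
  · rintro ⟨h1, h2⟩
    refine ⟨u 0, h1, ?_⟩
    funext k
    match k with
    | ⟨0, h⟩ => rfl
    | ⟨j+1, h⟩ =>
        exact (h2 ⟨j+1, h⟩ (by simp [Fin.ext_iff])).symm
  · rintro ⟨w', hw', rfl⟩
    refine ⟨hw', fun k hk => ?_⟩
    obtain ⟨i, rfl⟩ := Fin.eq_succ_of_ne_zero hk
    rfl

lemma Rsucc_cons_iff (i : Fin n) (w : SpW Fs) (t : TailW Fs) (u : (GF m Fs).W) :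
    (GF m Fs).R i.succ (consW m Fs w t) u ↔
      ∃ t', (Fs i.succ).R 0 (t i) (t' i) ∧ (∀ k, k ≠ i → t' k = t k) ∧
        u = consW m Fs w t' := by
  constructor
  · rintro ⟨h1, h2⟩
    refine ⟨fun k => u k.succ, h1, fun k hk => ?_, ?_⟩
    · exact (h2 k.succ (fun e => hk (Fin.succ_inj.1 e))).symm
    · funext k
      match k with
      | ⟨0, h⟩ => exact (h2 0 (Fin.succ_ne_zero i).symm).symm
      | ⟨j+1, h⟩ => rfl
  · rintro ⟨t', h1, h2, rfl⟩
    refine ⟨h1, fun k hk => ?_⟩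
    match k, hk with
    | ⟨0, h⟩, _ => rfl
    | ⟨j+1, h⟩, hk =>
        have hj : (⟨j, Nat.lt_of_succ_lt_succ h⟩ : Fin n) ≠ i := by
          intro e; exact hk (by rw [← e]; rfl)
        exact (h2 _ hj).symm

lemma origR0_cons_iff (x : (Fs 0).W) (t : TailW Fs) (b : ∀ i, (Fs i).W) :
    (prodFrame Fs).R 0 (consO Fs x t) b ↔ ∃ y, (Fs 0).R 0 x y ∧ b = consO Fs y t := by
  constructor
  · rintro ⟨h1, h2⟩
    refine ⟨b 0, h1, ?_⟩
    funext k
    match k with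
    | ⟨0, h⟩ => rfl
    | ⟨j+1, h⟩ =>
        exact (h2 ⟨j+1, h⟩ (by simp [Fin.ext_iff])).symm
  · rintro ⟨y, hy, rfl⟩
    refine ⟨hy, fun k hk => ?_⟩
    obtain ⟨i, rfl⟩ := Fin.eq_succ_of_ne_zero hk
    rfl

lemma origRsucc_cons_iff (i : Fin n) (x : (Fs 0).W) (t : TailW Fs) (b : ∀ i, (Fs i).W) :
    (prodFrame Fs).R i.succ (consO Fs x t) b ↔
      ∃ t', (Fs i.succ).R 0 (t i) (t' i) ∧ (∀ k, k ≠ i → t' k = t k) ∧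
        b = consO Fs x t' := by
  constructor
  · rintro ⟨h1, h2⟩
    refine ⟨fun k => b k.succ, h1, fun k hk => ?_, ?_⟩
    · exact (h2 k.succ (fun e => hk (Fin.succ_inj.1 e))).symm
    · funext k
      match k with
      | ⟨0, h⟩ => exact (h2 0 (Fin.succ_ne_zero i).symm).symm
      | ⟨j+1, h⟩ => rfl
  · rintro ⟨t', h1, h2, rfl⟩
    refine ⟨h1, fun k hk => ?_⟩
    match k, hk with
    | ⟨0, h⟩, _ => rfl
    | ⟨j+1, h⟩, hk =>
        have hj : (⟨j, Nat.lt_of_succ_lt_succ h⟩ : Fin n) ≠ i := by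
          intro e; exact hk (by rw [← e]; rfl)
        exact (h2 _ hj).symm

lemma spR_inr_iff (x : (Fs 0).W) (k j : ℕ) (w' : SpW Fs) :
    spR m Fs (inr (x,k,j)) w' ↔
      ∃ j', w' = inr (x,k,j') ∧ (j' = j ∨ (j' = j+1 ∧ j+1 ≤ 2*k+1)) := by
  cases w' with
  | inl y => simp [spR]
  | inr z =>
      obtain ⟨x',k',j'⟩ := z
      show (x' = x ∧ k' = k ∧ _) ↔ _
      constructor
      · rintro ⟨rfl, rfl, h⟩; exact ⟨j', rfl, h⟩
      · rintro ⟨j'', h, hd⟩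
        simp only [Sum.inr.injEq, Prod.mk.injEq] at h
        obtain ⟨rfl, rfl, rfl⟩ := h
        exact ⟨rfl, rfl, hd⟩

lemma spR_inl_iff (x : (Fs 0).W) (w' : SpW Fs) :
    spR m Fs (inl x) w' ↔
      (∃ y, w' = inl y ∧ (Fs 0).R 0 x y) ∨
      (∃ k, w' = inr (x,k,1) ∧ 1 ≤ k ∧ k ≤ m+1) := by
  cases w' with
  | inl y => simp [spR]
  | inr z =>
      obtain ⟨x',k,j⟩ := z
      show (x' = x ∧ j = 1 ∧ _ ∧ _) ↔ _
      constructor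
      · rintro ⟨rfl, rfl, h1, h2⟩; exact Or.inr ⟨k, rfl, h1, h2⟩
      · rintro (⟨y, h, -⟩ | ⟨k', h, h1, h2⟩)
        · cases h
        · simp only [Sum.inr.injEq, Prod.mk.injEq] at h
          obtain ⟨rfl, rfl, rfl⟩ := h
          exact ⟨rfl, rfl, h1, h2⟩

end Constr2

section Spikes

variable {n : ℕ} (m : ℕ) (Fs : Fin (n+1) → Frame 1) (v : ℕ → Set (∀ i, (Fs i).W))

lemma alpha_zero : (alphaF 0 : MF (n+1)) = .box 0 pv := rfl

lemma alpha_succ (s : ℕ) : (alphaF (s+1) : MF (n+1)) = blackDia (alphaF s) :=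
  Function.iterate_succ_apply' _ _ _

lemma pp_inr_enabled (x : (Fs 0).W) (t : TailW Fs) (k j : ℕ) (hk1 : 1 ≤ k)
    (hk2 : k ≤ m+1) (hj1 : 1 ≤ j) (hj2 : j ≤ 2*k+1)
    (he : enabled m Fs v x t k) :
    pp m Fs v (inr (x,k,j)) t ↔ Odd j := by
  simp [pp, hk1, hk2, hj1, hj2, he]

lemma pp_not_enabled (x : (Fs 0).W) (t : TailW Fs) (k j : ℕ)
    (h : ¬(1 ≤ k ∧ k ≤ m+1 ∧ enabled m Fs v x t k)) :
    pp m Fs v (inr (x,k,j)) t :=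
  fun hc => absurd ⟨hc.1, hc.2.1, hc.2.2.2.2⟩ h

lemma succ0_inr_iff (x : (Fs 0).W) (k j : ℕ) (t : TailW Fs) (u : (GF m Fs).W) :
    (GF m Fs).R 0 (consW m Fs (inr (x,k,j)) t) u ↔
      ∃ j', (j' = j ∨ (j' = j+1 ∧ j+1 ≤ 2*k+1)) ∧ u = consW m Fs (inr (x,k,j')) t := by
  rw [R0_cons_iff]
  constructor
  · rintro ⟨w', hw', rfl⟩
    rw [spR_inr_iff] at hw'
    obtain ⟨j', rfl, hj'⟩ := hw'
    exact ⟨j', hj', rfl⟩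
  · rintro ⟨j', hj', rfl⟩
    exact ⟨inr (x,k,j'), (spR_inr_iff m Fs x k j _).2 ⟨j', rfl, hj'⟩, rfl⟩

lemma sat_alpha_enabled (s : ℕ) (x : (Fs 0).W) (k j : ℕ) (t : TailW Fs)
    (hk1 : 1 ≤ k) (hk2 : k ≤ m+1) (hj1 : 1 ≤ j) (hj2 : j ≤ 2*k+1)
    (he : enabled m Fs v x t k) :
    Sat (GF m Fs) (v' m Fs v) (consW m Fs (inr (x,k,j)) t) (alphaF s) ↔
      (j + 2*s = 2*k+1 ∨ j + 2*s = 2*k+2) := by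
  induction s generalizing j with
  | zero =>
      rw [alpha_zero]
      constructor
      · intro h
        have hself := h _ ((succ0_inr_iff m Fs x k j t _).2 ⟨j, Or.inl rfl, rfl⟩)
        rw [sat_pv_cons, pp_inr_enabled m Fs v x t k j hk1 hk2 hj1 hj2 he,
          Nat.odd_iff] at hself
        by_cases hle : j + 1 ≤ 2*k+1
        · have hnext := h _ ((succ0_inr_iff m Fs x k j t _).2 ⟨j+1, Or.inr ⟨rfl, hle⟩, rfl⟩)
          rw [sat_pv_cons, pp_inr_enabled m Fs v x t k (j+1) hk1 hk2 (by omega) hle he,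
            Nat.odd_iff] at hnext
          omega
        · omega
      · intro h u hu
        rw [succ0_inr_iff] at hu
        obtain ⟨j', hj', rfl⟩ := hu
        have hj'' : j' = j := by omega
        subst hj''
        rw [sat_pv_cons, pp_inr_enabled m Fs v x t k j' hk1 hk2 hj1 hj2 he, Nat.odd_iff]
        omega
  | succ s ih =>
      erw [alpha_succ, blackDia, sat_dia]
      constructor
      · rintro ⟨u, hu, hsat⟩
        rw [succ0_inr_iff] at hu
        obtain ⟨j₁, hc₁, rfl⟩ := hu
        obtain ⟨hneg, hdia⟩ := hsat
        erw [sat_neg, sat_pv_cons,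
          pp_inr_enabled m Fs v x t k j₁ hk1 hk2 (by omega) (by omega) he,
          Nat.odd_iff] at hneg
        erw [sat_dia] at hdia
        obtain ⟨u₂, hu₂, hp₂, hα⟩ := hdia
        rw [succ0_inr_iff] at hu₂
        obtain ⟨j₂, hc₂, rfl⟩ := hu₂
        rw [sat_pv_cons,
          pp_inr_enabled m Fs v x t k j₂ hk1 hk2 (by omega) (by omega) he,
          Nat.odd_iff] at hp₂
        rw [ih j₂ (by omega) (by omega)] at hα
        omega
      · intro h
        rcases Nat.even_or_odd j with hpar | hpar
        · rw [Nat.even_iff] at hpar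
          have h2 : j + 2*(s+1) = 2*k+2 := by omega
          refine ⟨_, (succ0_inr_iff m Fs x k j t _).2 ⟨j, Or.inl rfl, rfl⟩, ?_, ?_⟩
          · erw [sat_neg, sat_pv_cons,
              pp_inr_enabled m Fs v x t k j hk1 hk2 hj1 hj2 he, Nat.odd_iff]
            omega
          · erw [sat_dia]
            refine ⟨_, (succ0_inr_iff m Fs x k j t _).2 ⟨j+1, Or.inr ⟨rfl, by omega⟩, rfl⟩,
              ?_, ?_⟩
            · rw [sat_pv_cons,
                pp_inr_enabled m Fs v x t k (j+1) hk1 hk2 (by omega) (by omega) he,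
                Nat.odd_iff]
              omega
            · rw [ih (j+1) (by omega) (by omega)]
              omega
        · rw [Nat.odd_iff] at hpar
          have h2 : j + 2*(s+1) = 2*k+1 := by omega
          refine ⟨_, (succ0_inr_iff m Fs x k j t _).2 ⟨j+1, Or.inr ⟨rfl, by omega⟩, rfl⟩,
            ?_, ?_⟩
          · erw [sat_neg, sat_pv_cons,
              pp_inr_enabled m Fs v x t k (j+1) hk1 hk2 (by omega) (by omega) he,
              Nat.odd_iff]
            omega
          · erw [sat_dia]
            refine ⟨_, (succ0_inr_iff m Fs x k (j+1) t _).2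
                ⟨j+2, Or.inr ⟨rfl, by omega⟩, rfl⟩, ?_, ?_⟩
            · rw [sat_pv_cons,
                pp_inr_enabled m Fs v x t k (j+2) hk1 hk2 (by omega) (by omega) he,
                Nat.odd_iff]
              omega
            · rw [ih (j+2) (by omega) (by omega)]
              omega

lemma sat_alpha_fail (x : (Fs 0).W) (k : ℕ) (t : TailW Fs)
    (hk : ¬(1 ≤ k ∧ k ≤ m+1 ∧ enabled m Fs v x t k)) (s j : ℕ) :
    ¬ Sat (GF m Fs) (v' m Fs v) (consW m Fs (inr (x,k,j)) t) (alphaF (s+1)) := by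
  erw [alpha_succ, blackDia, sat_dia]
  rintro ⟨u, hu, hneg, -⟩
  rw [succ0_inr_iff] at hu
  obtain ⟨j₁, -, rfl⟩ := hu
  erw [sat_neg, sat_pv_cons] at hneg
  exact hneg (pp_not_enabled m Fs v x t k j₁ hk)

lemma sat_beta_inl (x : (Fs 0).W) (t : TailW Fs) (s : ℕ) (hs : 1 ≤ s) :
    Sat (GF m Fs) (v' m Fs v) (consW m Fs (inl x) t) (betaF s) ↔
      (s ≤ m+1 ∧ enabled m Fs v x t s) := by
  obtain ⟨s', rfl⟩ : ∃ s', s = s' + 1 := ⟨s - 1, by omega⟩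
  constructor
  · rintro ⟨-, hdia⟩
    erw [sat_dia] at hdia
    obtain ⟨u, hu, hp, hα⟩ := hdia
    rw [R0_cons_iff] at hu
    obtain ⟨w', hw', rfl⟩ := hu
    rw [spR_inl_iff] at hw'
    rcases hw' with ⟨y, rfl, -⟩ | ⟨k, rfl, hk1, hk2⟩
    · rw [sat_pv_cons] at hp
      exact hp.elim
    · by_cases he : enabled m Fs v x t k
      · rw [sat_alpha_enabled m Fs v (s'+1) x k 1 t hk1 hk2 (by omega) (by omega) he] at hα
        have : s' + 1 = k := by omega
        subst this
        exact ⟨hk2, he⟩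
      · exact absurd hα (sat_alpha_fail m Fs v x k t (fun hc => he hc.2.2) s' 1)
  · rintro ⟨hs2, he⟩
    refine ⟨?_, ?_⟩
    · erw [sat_neg, sat_pv_cons]
      exact fun h => h.elim
    · erw [sat_dia]
      refine ⟨consW m Fs (inr (x, s'+1, 1)) t,
        (R0_cons_iff m Fs _ _ _).2 ⟨inr (x, s'+1, 1),
          (spR_inl_iff m Fs x _).2 (Or.inr ⟨s'+1, rfl, hs, hs2⟩), rfl⟩, ?_, ?_⟩
      · rw [sat_pv_cons, pp_inr_enabled m Fs v x t (s'+1) 1 hs hs2 (by omega) (by omega) he]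
        exact ⟨0, rfl⟩
      · rw [sat_alpha_enabled m Fs v (s'+1) x (s'+1) 1 t hs hs2 (by omega) (by omega) he]
        omega

lemma sat_B_inl (x : (Fs 0).W) (t : TailW Fs) :
    Sat (GF m Fs) (v' m Fs v) (consW m Fs (inl x) t) (Bf m) :=
  (sat_beta_inl m Fs v x t (m+1) (by omega)).2 ⟨le_refl _, Or.inl rfl⟩

lemma sat_B_inr (x : (Fs 0).W) (k j : ℕ) (t : TailW Fs) :
    ¬ Sat (GF m Fs) (v' m Fs v) (consW m Fs (inr (x,k,j)) t) (Bf m) := by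
  rintro ⟨hneg, hdia⟩
  erw [sat_neg, sat_pv_cons] at hneg
  simp only [pp, Classical.not_imp] at hneg
  obtain ⟨⟨hk1, hk2, hj1, hj2, he⟩, hodd⟩ := hneg
  rw [Nat.odd_iff] at hodd
  erw [sat_dia] at hdia
  obtain ⟨u, hu, hp, hα⟩ := hdia
  rw [succ0_inr_iff] at hu
  obtain ⟨j', hc, rfl⟩ := hu
  rw [sat_pv_cons,
    pp_inr_enabled m Fs v x t k j' hk1 hk2 (by omega) (by omega) he, Nat.odd_iff] at hp
  rw [sat_alpha_enabled m Fs v (m+1) x k j' t hk1 hk2 (by omega) (by omega) he] at hα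
  omega

lemma sat_B_iff (w : (GF m Fs).W) :
    Sat (GF m Fs) (v' m Fs v) w (Bf m) ↔ ∃ x, w 0 = inl x := by
  constructor
  · intro h
    rcases hw0 : w 0 with x | z
    · exact ⟨x, rfl⟩
    · exfalso
      obtain ⟨x, k, j⟩ := z
      rw [consW_eta m Fs w, hw0] at h
      exact sat_B_inr m Fs v x k j _ h
  · rintro ⟨x, hw0⟩
    have h := sat_B_inl m Fs v x (fun i => w i.succ)
    rw [consW_eta m Fs w, hw0]
    exact h

end Spikes

section Levels

variable {n : ℕ} (m : ℕ) (Fs : Fin (n+1) → Frame 1) (v : ℕ → Set (∀ i, (Fs i).W))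

lemma sat_boxLe_all (ψ : MF (n+1)) (h : ∀ w, Sat (GF m Fs) (v' m Fs v) w ψ)
    (d : ℕ) : ∀ w, Sat (GF m Fs) (v' m Fs v) w (boxLe d ψ) := by
  induction d with
  | zero => exact h
  | succ d ih =>
      intro w
      rw [show (boxLe (d+1) ψ : MF (n+1)) =
        bigAnd (boxLe d ψ) (List.ofFn fun i : Fin (n+1) => .box i (boxLe d ψ)) from rfl,
        sat_bigAnd]
      refine ⟨ih w, ?_⟩
      intro χ hχ
      rw [List.mem_ofFn] at hχ
      obtain ⟨i, rfl⟩ := hχ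
      intro u _
      exact ih u

lemma tailR_head (i : Fin n) (w u : (GF m Fs).W)
    (h : (GF m Fs).R i.succ w u) : u 0 = w 0 :=
  (h.2 0 (Fin.succ_ne_zero i).symm).symm

lemma sat_boxLeTail_of (P : SpW Fs → Prop) (ψ : MF (n+1))
    (h : ∀ w, P (w 0) → Sat (GF m Fs) (v' m Fs v) w ψ) (d : ℕ) :
    ∀ w, P (w 0) → Sat (GF m Fs) (v' m Fs v) w (boxLeTail d ψ) := by
  induction d with
  | zero => exact h
  | succ d ih =>
      intro w hw
      rw [show (boxLeTail (d+1) ψ : MF (n+1)) =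
        bigAnd (boxLeTail d ψ) (List.ofFn fun i : Fin n => .box i.succ (boxLeTail d ψ)) from rfl,
        sat_bigAnd]
      refine ⟨ih w hw, ?_⟩
      intro χ hχ
      rw [List.mem_ofFn] at hχ
      obtain ⟨i, rfl⟩ := hχ
      intro u hu
      refine ih u ?_
      rw [tailR_head m Fs i w u hu]
      exact hw

lemma sat_A (x : (Fs 0).W) (t : TailW Fs) (φ : MF (n+1)) :
    Sat (GF m Fs) (v' m Fs v) (consW m Fs (inl x) t) (Af m φ) := by
  refine ⟨sat_B_inl m Fs v x t, ?_, ?_⟩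
  · apply sat_boxLe_all
    intro w hB
    rw [sat_B_iff] at hB
    exact sat_boxLeTail_of m Fs v (fun h => ∃ x, h = inl x) (Bf m)
      (fun u hu => (sat_B_iff m Fs v u).2 hu) _ w hB
  · apply sat_boxLe_all
    intro w hdia
    rw [sat_B_iff]
    by_contra hno
    rw [diaLeTail, sat_neg] at hdia
    exact hdia (sat_boxLeTail_of m Fs v (fun h => ¬∃ x, h = inl x) (MF.neg (Bf m))
      (fun u hu => by erw [sat_neg, sat_B_iff]; exact hu) _ w hno)

lemma sigma_correct (ψ : MF (n+1)) :
    (∀ q ∈ ψ.vars, 1 ≤ q ∧ q ≤ m) → ∀ (x : (Fs 0).W) (t : TailW Fs),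
      (Sat (prodFrame Fs) v (consO Fs x t) ψ ↔
        Sat (GF m Fs) (v' m Fs v) (consW m Fs (inl x) t) (sigmaT m ψ)) := by
  induction ψ with
  | var q =>
      intro hv x t
      obtain ⟨h1, h2⟩ := hv q (by simp [MF.vars])
      show (consO Fs x t ∈ v q) ↔ _
      rw [show sigmaT m (.var q) = betaF q from rfl, sat_beta_inl m Fs v x t q h1]
      constructor
      · intro hmem; exact ⟨by omega, Or.inr ⟨h1, h2, hmem⟩⟩
      · rintro ⟨-, (he | ⟨-, -, hmem⟩)⟩
        · omega
        · exact hmem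
  | bot => intro _ x t; exact Iff.rfl
  | and a b iha ihb =>
      intro hv x t
      have ha := iha (fun q hq => hv q (Set.mem_union_left _ hq)) x t
      have hb := ihb (fun q hq => hv q (Set.mem_union_right _ hq)) x t
      exact and_congr ha hb
  | or a b iha ihb =>
      intro hv x t
      have ha := iha (fun q hq => hv q (Set.mem_union_left _ hq)) x t
      have hb := ihb (fun q hq => hv q (Set.mem_union_right _ hq)) x t
      exact or_congr ha hb
  | imp a b iha ihb =>
      intro hv x t
      have ha := iha (fun q hq => hv q (Set.mem_union_left _ hq)) x t
      have hb := ihb (fun q hq => hv q (Set.mem_union_right _ hq)) x t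
      exact imp_congr ha hb
  | box i a ih =>
      intro hv x t
      have ih' := ih (fun q hq => hv q hq)
      induction i using Fin.cases with
      | zero =>
          constructor
          · intro hsat u hu hB
            rw [R0_cons_iff] at hu
            obtain ⟨w', hw', rfl⟩ := hu
            rw [spR_inl_iff] at hw'
            rcases hw' with ⟨y, rfl, hR⟩ | ⟨k, rfl, -, -⟩
            · rw [← ih' y t]
              exact hsat _ ((origR0_cons_iff Fs x t _).2 ⟨y, hR, rfl⟩)
            · exact absurd hB (sat_B_inr m Fs v x k 1 t)
          · intro hsat b hb
            erw [origR0_cons_iff] at hb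
            obtain ⟨y, hy, rfl⟩ := hb
            rw [ih' y t]
            exact hsat _ ((R0_cons_iff m Fs _ _ _).2 ⟨inl y,
              (spR_inl_iff m Fs x _).2 (Or.inl ⟨y, rfl, hy⟩), rfl⟩) (sat_B_inl m Fs v y t)
      | succ i' =>
          constructor
          · intro hsat u hu hB
            rw [Rsucc_cons_iff] at hu
            obtain ⟨t', h1, h2, rfl⟩ := hu
            rw [← ih' x t']
            exact hsat _ ((origRsucc_cons_iff Fs i' x t _).2 ⟨t', h1, h2, rfl⟩)
          · intro hsat b hb
            erw [origRsucc_cons_iff] at hb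
            obtain ⟨t', h1, h2, rfl⟩ := hb
            rw [ih' x t']
            exact hsat _ ((Rsucc_cons_iff m Fs i' _ _ _).2 ⟨t', h1, h2, rfl⟩)
              (sat_B_inl m Fs v x t')

end Levels

lemma reflexive_of_validT (F : Frame 1) (h : ValidSet F logicT) : ReflexiveFrame F := by
  intro x
  have hT : (MF.imp (.box 0 (.var 0)) (.var 0) : MF 1) ∈ logicT :=
    fun F' hF' v y hb => hb y (hF' y)
  exact h _ hT (fun _ => {y | F.R 0 x y}) x (fun y hy => hy)

lemma G1_reflexive {n : ℕ} (m : ℕ) (Fs : Fin (n+1) → Frame 1)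
    (h : ReflexiveFrame (Fs 0)) : ReflexiveFrame (G1 m Fs) := by
  intro w
  cases w with
  | inl x => exact h x
  | inr z =>
      obtain ⟨x, k, j⟩ := z
      exact ⟨rfl, rfl, Or.inl rfl⟩

end Lemma31
end ModalProducts
open ModalProducts
open ModalProducts.Lemma31

/-- **Lemma 3.1, direction (⇐), contrapositive.** Let `n ≥ 1`, let `L₂, …, Lₙ` be
Kripke complete monomodal logics and `L = T × L₂ × … × Lₙ`.  For an `(n+1)`-modal
formula `φ` whose variables are among `p₁, …, p_m`, with `A` and `σ` defined from `φ`: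
if `φ ∉ L` then `A → σ(φ) ∉ L`. -/
theorem products_with_T_lemma_3_1_left (n m : ℕ) (Ls : Fin n → Set (MF 1))
    (hLs : ∀ i, KripkeComplete (Ls i))
    (L : Set (MF (n+1)))
    (hL : L = productLogic (Fin.cases (motive := fun _ => Set (MF 1)) logicT Ls))
    (φ : MF (n+1)) (hvars : ∀ q ∈ φ.vars, 1 ≤ q ∧ q ≤ m)
    (hφ : φ ∉ L) :
    MF.imp (Af m φ) (sigmaT m φ) ∉ L := by
  subst hL
  intro hmem
  simp only [productLogic, Logic, Set.mem_setOf_eq] at hφ hmem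
  push_neg at hφ
  obtain ⟨F, ⟨Fs, hFs, rfl⟩, hnval⟩ := hφ
  simp only [Valid] at hnval
  push_neg at hnval
  obtain ⟨v, w, hw⟩ := hnval
  have hrefl : ReflexiveFrame (Fs 0) :=
    reflexive_of_validT _ (by have := hFs 0; rwa [Fin.cases_zero] at this)
  have hGs : ∀ i, ValidSet (Gs m Fs i)
      ((Fin.cases (motive := fun _ => Set (MF 1)) logicT Ls) i) := by
    intro i
    induction i using Fin.cases with
    | zero =>
        rw [Fin.cases_zero]
        intro ψ hψ
        exact hψ _ (G1_reflexive m Fs hrefl)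
    | succ i' =>
        rw [Fin.cases_succ]
        have := hFs i'.succ
        rwa [Fin.cases_succ] at this
  have hval := hmem (prodFrame (Gs m Fs)) ⟨Gs m Fs, hGs, rfl⟩
  have hA := sat_A m Fs v (w 0) (fun i => w i.succ) φ
  have hσ : Sat (GF m Fs) (v' m Fs v)
      (consW m Fs (Sum.inl (w 0)) (fun i => w i.succ)) (sigmaT m φ) :=
    hval (v' m Fs v) (consW m Fs (Sum.inl (w 0)) (fun i => w i.succ)) hA
  rw [← sigma_correct m Fs v φ hvars (w 0) (fun i => w i.succ)] at hσ
  rw [← consO_eta Fs w] at hσ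
  exact hw hσ
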